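/- Let q be a positive integer, B a positive integer, and A = (A₁,A₂) ∈ ℤ² with gcd(A₁,A₂,B) = 1. Let S_q = {u ∈ (ℤ/qℤ)² : gcd(B u₁ + A₁, B u₂ + A₂, B q) = 1}. Then #S_q ≥ (6/π²) q², i.e., #S_q = q² ∏_{p | q, p ∤ B} (1 − 1/p²) ≥ (6/π²) q². -/

import Mathlib

lemma prod_isCoprime_iff {R S : Type*} [CommSemiring R] [CommSemiring S]
    {a b : R × S} : IsCoprime a b ↔ IsCoprime a.1 b.1 ∧ IsCoprime a.2 b.2 := by
  constructor
  · intro h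
    exact ⟨h.map (RingHom.fst R S), h.map (RingHom.snd R S)⟩
  · rintro ⟨⟨u₁, v₁, h₁⟩, ⟨u₂, v₂, h₂⟩⟩
    exact ⟨(u₁, u₂), (v₁, v₂), Prod.ext h₁ h₂⟩

lemma gcd_gcd_eq_one_iff (q : ℕ) (a b : ℤ) :
    Int.gcd (Int.gcd a b : ℤ) (q : ℤ) = 1 ↔ IsCoprime (a : ZMod q) (b : ZMod q) := by
  rw [← Int.isCoprime_iff_gcd_eq_one]
  constructor
  · rintro ⟨x, y, hxy⟩
    refine ⟨(x * Int.gcdA a b : ℤ), (x * Int.gcdB a b : ℤ), ?_⟩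
    have : ((x * (a * Int.gcdA a b + b * Int.gcdB a b) + y * q : ℤ) : ZMod q) = 1 := by
      rw [← Int.gcd_eq_gcd_ab]
      exact_mod_cast congrArg (Int.cast : ℤ → ZMod q) hxy
    push_cast at this
    rw [← this]
    push_cast
    rw [ZMod.natCast_self]
    ring
  · rintro ⟨u, v, huv⟩
    obtain ⟨u', hu'⟩ : ∃ u' : ℤ, (u' : ZMod q) = u := ⟨(ZMod.cast u : ℤ), ZMod.intCast_zmod_cast u⟩
    obtain ⟨v', hv'⟩ : ∃ v' : ℤ, (v' : ZMod q) = v := ⟨(ZMod.cast v : ℤ), ZMod.intCast_zmod_cast v⟩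
    have : ((u' * a + v' * b - 1 : ℤ) : ZMod q) = 0 := by
      push_cast
      rw [hu', hv', huv]; ring
    obtain ⟨w, hw⟩ := (ZMod.intCast_zmod_eq_zero_iff_dvd _ _).mp this
    obtain ⟨a', ha'⟩ : (Int.gcd a b : ℤ) ∣ a := Int.gcd_dvd_left a b
    obtain ⟨b', hb'⟩ : (Int.gcd a b : ℤ) ∣ b := Int.gcd_dvd_right a b
    refine ⟨u' * a' + v' * b', -w, ?_⟩
    have : u' * a + v' * b - (q : ℤ) * w = 1 := by omega
    calc (u' * a' + v' * b') * (Int.gcd a b : ℤ) + -w * q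
        = u' * ((Int.gcd a b : ℤ) * a') + v' * ((Int.gcd a b : ℤ) * b') - (q:ℤ) * w := by ring
      _ = 1 := by rw [← ha', ← hb']; exact this

lemma gcd_with_B (B : ℕ) (A : ℤ × ℤ)
    (hgcd : Int.gcd (Int.gcd A.1 A.2 : ℤ) (B : ℤ) = 1) (u₁ u₂ : ℤ) :
    IsCoprime (Int.gcd ((B:ℤ) * u₁ + A.1) ((B:ℤ) * u₂ + A.2) : ℤ) (B : ℤ) := by
  obtain ⟨x, y, hxy⟩ := Int.isCoprime_iff_gcd_eq_one.mpr hgcd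
  set a : ℤ := (B:ℤ) * u₁ + A.1 with ha
  set b : ℤ := (B:ℤ) * u₂ + A.2 with hb
  obtain ⟨a', ha'⟩ : (Int.gcd a b : ℤ) ∣ a := Int.gcd_dvd_left a b
  obtain ⟨b', hb'⟩ : (Int.gcd a b : ℤ) ∣ b := Int.gcd_dvd_right a b
  have hg : (Int.gcd A.1 A.2 : ℤ) = A.1 * Int.gcdA A.1 A.2 + A.2 * Int.gcdB A.1 A.2 :=
    Int.gcd_eq_gcd_ab A.1 A.2
  refine ⟨x * Int.gcdA A.1 A.2 * a' + x * Int.gcdB A.1 A.2 * b',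
    y - x * Int.gcdA A.1 A.2 * u₁ - x * Int.gcdB A.1 A.2 * u₂, ?_⟩
  have hA1 : A.1 = a - (B:ℤ) * u₁ := by rw [ha]; ring
  have hA2 : A.2 = b - (B:ℤ) * u₂ := by rw [hb]; ring
  calc (x * Int.gcdA A.1 A.2 * a' + x * Int.gcdB A.1 A.2 * b') * (Int.gcd a b : ℤ)
      + (y - x * Int.gcdA A.1 A.2 * u₁ - x * Int.gcdB A.1 A.2 * u₂) * (B:ℤ)
      = x * Int.gcdA A.1 A.2 * ((Int.gcd a b : ℤ) * a')
        + x * Int.gcdB A.1 A.2 * ((Int.gcd a b : ℤ) * b')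
        + (y - x * Int.gcdA A.1 A.2 * u₁ - x * Int.gcdB A.1 A.2 * u₂) * (B:ℤ) := by ring
    _ = x * (A.1 * Int.gcdA A.1 A.2 + A.2 * Int.gcdB A.1 A.2) + y * (B:ℤ) := by
        rw [← ha', ← hb', hA1, hA2]; ring
    _ = 1 := by rw [← hg]; exact hxy

def Pc (B : ℕ) (A : ℤ × ℤ) (q : ℕ) (u : ZMod q × ZMod q) : Prop :=
  IsCoprime ((B : ZMod q) * u.1 + (A.1 : ZMod q)) ((B : ZMod q) * u.2 + (A.2 : ZMod q))

noncomputable def cnt (B : ℕ) (A : ℤ × ℤ) (q : ℕ) : ℕ :=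
  Nat.card {u : ZMod q × ZMod q // Pc B A q u}

lemma cond_iff (q B : ℕ) (hB : 0 < B) (A : ℤ × ℤ)
    (hgcd : Int.gcd (Int.gcd A.1 A.2 : ℤ) (B : ℤ) = 1) (u : ℤ × ℤ) :
    Int.gcd (Int.gcd ((B : ℤ) * u.1 + A.1) ((B : ℤ) * u.2 + A.2) : ℤ) ((B : ℤ) * q) = 1
      ↔ Pc B A q ((u.1 : ZMod q), (u.2 : ZMod q)) := by
  set a : ℤ := (B:ℤ) * u.1 + A.1
  set b : ℤ := (B:ℤ) * u.2 + A.2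
  have h1 : Int.gcd (Int.gcd a b : ℤ) ((B:ℤ) * q) = 1
      ↔ IsCoprime (Int.gcd a b : ℤ) ((B:ℤ) * q) := Int.isCoprime_iff_gcd_eq_one.symm
  rw [h1, IsCoprime.mul_right_iff]
  have hB' : IsCoprime (Int.gcd a b : ℤ) (B:ℤ) := gcd_with_B B A hgcd u.1 u.2
  simp only [hB', true_and]
  rw [Int.isCoprime_iff_gcd_eq_one, gcd_gcd_eq_one_iff]
  show IsCoprime (((B:ℤ) * u.1 + A.1 : ℤ) : ZMod q) (((B:ℤ) * u.2 + A.2 : ℤ) : ZMod q) ↔ _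
  unfold Pc
  push_cast
  rfl

lemma ncard_eq_cnt (q B : ℕ) (hq : 0 < q) (hB : 0 < B) (A : ℤ × ℤ)
    (hgcd : Int.gcd (Int.gcd A.1 A.2 : ℤ) (B : ℤ) = 1) :
    ({u : ℤ × ℤ | 0 ≤ u.1 ∧ u.1 < q ∧ 0 ≤ u.2 ∧ u.2 < q ∧
        Int.gcd (Int.gcd ((B : ℤ) * u.1 + A.1) ((B : ℤ) * u.2 + A.2) : ℤ)
          ((B : ℤ) * q) = 1}).ncard = cnt B A q := by
  haveI : NeZero q := ⟨hq.ne'⟩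
  rw [← Nat.card_coe_set_eq]
  refine Nat.card_congr ?_
  refine ⟨fun x => ⟨((x.1.1 : ZMod q), (x.1.2 : ZMod q)), ?_⟩,
    fun v => ⟨(((v.1.1.val : ℤ)), ((v.1.2.val : ℤ))), ?_, ?_, ?_, ?_, ?_⟩, ?_, ?_⟩
  · exact (cond_iff q B hB A hgcd x.1).mp x.2.2.2.2.2
  · positivity
  · show ((v.1.1.val : ℤ)) < (q:ℤ)
    exact_mod_cast ZMod.val_lt v.1.1
  · positivity
  · show ((v.1.2.val : ℤ)) < (q:ℤ)
    exact_mod_cast ZMod.val_lt v.1.2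
  · rw [cond_iff q B hB A hgcd]
    have e1 : (((v.1.1.val : ℤ)) : ZMod q) = v.1.1 := by
      rw [Int.cast_natCast, ZMod.natCast_val, ZMod.cast_id]
    have e2 : (((v.1.2.val : ℤ)) : ZMod q) = v.1.2 := by
      rw [Int.cast_natCast, ZMod.natCast_val, ZMod.cast_id]
    simpa [e1, e2] using v.2
  · rintro ⟨⟨x₁, x₂⟩, h0, h1, h2, h3, h4⟩
    ext : 2
    · simp only
      rw [ZMod.val_intCast, Int.emod_eq_of_lt h0 (by exact_mod_cast h1)]
    · simp only
      rw [ZMod.val_intCast, Int.emod_eq_of_lt h2 (by exact_mod_cast h3)]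
  · rintro ⟨⟨v₁, v₂⟩, hv⟩
    ext : 2
    · simp only
      rw [Int.cast_natCast, ZMod.natCast_val, ZMod.cast_id]
    · simp only
      rw [Int.cast_natCast, ZMod.natCast_val, ZMod.cast_id]

lemma isCoprime_map_ringEquiv {R S : Type*} [CommSemiring R] [CommSemiring S]
    (e : R ≃+* S) {x y : R} : IsCoprime (e x) (e y) ↔ IsCoprime x y :=
  ⟨fun h => by simpa using h.map e.symm.toRingHom, fun h => h.map e.toRingHom⟩

lemma cnt_mul (B : ℕ) (A : ℤ × ℤ) (m n : ℕ) (h : m.Coprime n) :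
    cnt B A (m * n) = cnt B A m * cnt B A n := by
  set e := ZMod.chineseRemainder h with he
  have key : ∀ x : ZMod (m * n), ∀ c : ℤ,
      e ((B : ZMod (m*n)) * x + (c : ZMod (m*n)))
        = ((B : ZMod m) * (e x).1 + (c : ZMod m), (B : ZMod n) * (e x).2 + (c : ZMod n)) := by
    intro x c
    rw [map_add, map_mul, map_natCast, map_intCast]
    rfl
  have cond : ∀ u : ZMod (m*n) × ZMod (m*n), Pc B A (m*n) u ↔
      (Pc B A m ((e u.1).1, (e u.2).1) ∧ Pc B A n ((e u.1).2, (e u.2).2)) := by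
    intro u
    unfold Pc
    rw [← isCoprime_map_ringEquiv e, key u.1 A.1, key u.2 A.2, prod_isCoprime_iff]
  unfold cnt
  rw [← Nat.card_prod]
  refine Nat.card_congr ?_
  refine ⟨fun u => ⟨⟨((e u.1.1).1, (e u.1.2).1), ((cond u.1).mp u.2).1⟩,
    ⟨((e u.1.1).2, (e u.1.2).2), ((cond u.1).mp u.2).2⟩⟩,
    fun vw => ⟨(e.symm (vw.1.1.1, vw.2.1.1), e.symm (vw.1.1.2, vw.2.1.2)), ?_⟩, ?_, ?_⟩
  · rw [cond]
    simpa using ⟨vw.1.2, vw.2.2⟩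
  · rintro ⟨⟨x₁, x₂⟩, hx⟩
    ext : 2 <;> simp
  · rintro ⟨⟨⟨v₁, v₂⟩, hv⟩, ⟨⟨w₁, w₂⟩, hw⟩⟩
    ext : 3 <;> simp

lemma isCoprime_zmod_pp (p : ℕ) (hp : p.Prime) (j : ℕ) (a b : ZMod (p^(j+1))) :
    IsCoprime a b ↔
      ¬(ZMod.castHom (dvd_pow_self p (Nat.succ_ne_zero j)) (ZMod p) a = 0 ∧
        ZMod.castHom (dvd_pow_self p (Nat.succ_ne_zero j)) (ZMod p) b = 0) := by
  haveI : Fact p.Prime := ⟨hp⟩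
  set π := ZMod.castHom (dvd_pow_self p (Nat.succ_ne_zero j)) (ZMod p)
  constructor
  · rintro ⟨u, v, huv⟩ ⟨ha, hb⟩
    have := congrArg π huv
    rw [map_add, map_mul, map_mul, ha, hb, mul_zero, mul_zero, add_zero, map_one] at this
    exact zero_ne_one this
  · intro h
    have key : ∀ c : ZMod (p^(j+1)), π c ≠ 0 → IsCoprime c b ∨ True → IsUnit c := by
      intro c hc _
      have hval : ¬ p ∣ c.val := by
        intro hdvd
        apply hc
        have : π ((c.val : ℕ) : ZMod (p^(j+1))) = ((c.val : ℕ) : ZMod p) := map_natCast π c.val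
        rw [ZMod.natCast_val, ZMod.cast_id] at this
        rw [this]
        exact (ZMod.natCast_eq_zero_iff _ _).mpr hdvd
      have hcop : Nat.Coprime c.val (p^(j+1)) :=
        Nat.Coprime.pow_right _ (((Nat.Prime.coprime_iff_not_dvd hp).mpr hval).symm)
      have := (ZMod.isUnit_iff_coprime c.val (p^(j+1))).mpr hcop
      rwa [ZMod.natCast_val, ZMod.cast_id] at this
    rcases not_and_or.mp h with ha | hb
    · obtain ⟨u, hu⟩ := (key a ha (Or.inr trivial)).exists_left_inv
      exact ⟨u, 0, by rw [← hu]; ring⟩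
    · obtain ⟨u, hu⟩ := (key b hb (Or.inr trivial)).exists_left_inv
      exact ⟨0, u, by rw [← hu]; ring⟩

lemma card_fiber (p : ℕ) (hp : p.Prime) (j : ℕ) [NeZero (p ^ (j+1))] (c : ZMod p) :
    (Finset.univ.filter (fun x : ZMod (p^(j+1)) =>
      ZMod.castHom (dvd_pow_self p (Nat.succ_ne_zero j)) (ZMod p) x = c)).card = p ^ j := by
  haveI : Fact p.Prime := ⟨hp⟩
  haveI : NeZero (p^(j+1)) := ⟨pow_ne_zero _ hp.pos.ne'⟩
  set π := ZMod.castHom (dvd_pow_self p (Nat.succ_ne_zero j)) (ZMod p)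
  have hπ : ∀ x : ZMod (p^(j+1)), π x = ((x.val : ℕ) : ZMod p) := by
    intro x
    have : π ((x.val : ℕ) : ZMod (p^(j+1))) = ((x.val : ℕ) : ZMod p) := map_natCast π x.val
    rwa [ZMod.natCast_val, ZMod.cast_id] at this
  rw [← Finset.card_range (p ^ j)]
  apply Finset.card_bij' (fun x _ => x.val / p)
    (fun i _ => ((c.val + p * i : ℕ) : ZMod (p^(j+1))))
  · -- maps into range
    intro x hx
    rw [Finset.mem_filter] at hx
    obtain ⟨k, hk⟩ := (ZMod.natCast_eq_iff p x.val c).mp (by rw [← hπ x]; exact hx.2)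
    rw [Finset.mem_range]
    have hxlt : x.val < p^(j+1) := ZMod.val_lt x
    have : p * k < p^(j+1) := by omega
    have hklt : k < p^j := by
      rcases Nat.lt_or_ge k (p^j) with h | h
      · exact h
      · exfalso
        have : p * p^j ≤ p * k := Nat.mul_le_mul_left _ h
        rw [← pow_succ'] at this
        omega
    have : x.val / p = k := by
      rw [hk, Nat.add_mul_div_left _ _ hp.pos, Nat.div_eq_of_lt (ZMod.val_lt c)]
      omega
    rwa [this]
  · -- maps into filter
    intro i hi
    rw [Finset.mem_range] at hi
    have hlt : c.val + p * i < p^(j+1) := by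
      have h1 : c.val < p := ZMod.val_lt c
      have h2 : p * (i+1) ≤ p * p^j := Nat.mul_le_mul_left _ hi
      rw [← pow_succ'] at h2
      have h3 : p * (i+1) = p * i + p := by ring
      omega
    rw [Finset.mem_filter]
    refine ⟨Finset.mem_univ _, ?_⟩
    rw [hπ, ZMod.val_natCast_of_lt hlt]
    push_cast
    rw [ZMod.natCast_self]
    simp [ZMod.natCast_val, ZMod.cast_id]
  · -- left inverse
    intro x hx
    rw [Finset.mem_filter] at hx
    obtain ⟨k, hk⟩ := (ZMod.natCast_eq_iff p x.val c).mp (by rw [← hπ x]; exact hx.2)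
    have : x.val / p = k := by
      rw [hk, Nat.add_mul_div_left _ _ hp.pos, Nat.div_eq_of_lt (ZMod.val_lt c)]
      omega
    rw [this, ← hk, ZMod.natCast_val, ZMod.cast_id]
  · -- right inverse
    intro i hi
    rw [Finset.mem_range] at hi
    have hlt : c.val + p * i < p^(j+1) := by
      have h1 : c.val < p := ZMod.val_lt c
      have h2 : p * (i+1) ≤ p * p^j := Nat.mul_le_mul_left _ hi
      rw [← pow_succ'] at h2
      have h3 : p * (i+1) = p * i + p := by ring
      omega
    rw [ZMod.val_natCast_of_lt hlt, Nat.add_mul_div_left _ _ hp.pos,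
      Nat.div_eq_of_lt (ZMod.val_lt c)]
    omega


lemma cnt_one (B : ℕ) (A : ℤ × ℤ) : cnt B A 1 = 1 := by
  have hall : ∀ u : ZMod 1 × ZMod 1, Pc B A 1 u :=
    fun u => ⟨0, 0, Subsingleton.elim _ _⟩
  calc cnt B A 1 = Nat.card (ZMod 1 × ZMod 1) :=
        Nat.card_congr (Equiv.subtypeUnivEquiv hall)
    _ = 1 := by simp [Nat.card_eq_fintype_card]

lemma cnt_pp_dvd (B : ℕ) (A : ℤ × ℤ)
    (hgcd : Int.gcd (Int.gcd A.1 A.2 : ℤ) (B : ℤ) = 1)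
    (p j : ℕ) (hp : p.Prime) (hpB : p ∣ B) :
    cnt B A (p^(j+1)) = (p^(j+1))^2 := by
  haveI : Fact p.Prime := ⟨hp⟩
  haveI : NeZero (p^(j+1)) := ⟨pow_ne_zero _ hp.pos.ne'⟩
  have hall : ∀ u : ZMod (p^(j+1)) × ZMod (p^(j+1)), Pc B A (p^(j+1)) u := by
    intro u
    rw [Pc, isCoprime_zmod_pp p hp j]
    rintro ⟨h1, h2⟩
    have hB0 : ((B : ℕ) : ZMod p) = 0 := (ZMod.natCast_eq_zero_iff _ _).mpr hpB
    rw [map_add, map_mul, map_natCast, map_intCast, hB0, zero_mul, zero_add] at h1 h2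
    have d1 : (p : ℤ) ∣ A.1 := (ZMod.intCast_zmod_eq_zero_iff_dvd _ _).mp h1
    have d2 : (p : ℤ) ∣ A.2 := (ZMod.intCast_zmod_eq_zero_iff_dvd _ _).mp h2
    have d3 : (p : ℤ) ∣ (Int.gcd A.1 A.2 : ℤ) := Int.dvd_coe_gcd d1 d2
    have d4 : (p : ℤ) ∣ ((B : ℕ) : ℤ) := Int.natCast_dvd_natCast.mpr hpB
    have d5 : (p : ℤ) ∣ (Int.gcd (Int.gcd A.1 A.2 : ℤ) ((B:ℕ) : ℤ) : ℤ) := Int.dvd_coe_gcd d3 d4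
    rw [hgcd] at d5
    have h1' : p ∣ 1 := Int.ofNat_dvd.mp (by exact_mod_cast d5)
    exact hp.one_lt.ne' (Nat.dvd_one.mp h1')
  calc cnt B A (p^(j+1)) = Nat.card (ZMod (p^(j+1)) × ZMod (p^(j+1))) :=
        Nat.card_congr (Equiv.subtypeUnivEquiv hall)
    _ = (p^(j+1))^2 := by
        rw [Nat.card_prod, Nat.card_zmod]
        ring

lemma cnt_pp_not_dvd (B : ℕ) (A : ℤ × ℤ) (p j : ℕ) (hp : p.Prime) (hpB : ¬ p ∣ B) :
    cnt B A (p^(j+1)) = (p^(j+1))^2 - (p^j)^2 := by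
  classical
  haveI : Fact p.Prime := ⟨hp⟩
  haveI : NeZero (p^(j+1)) := ⟨pow_ne_zero _ hp.pos.ne'⟩
  set π := ZMod.castHom (dvd_pow_self p (Nat.succ_ne_zero j)) (ZMod p) with hπdef
  have hB0 : ((B : ℕ) : ZMod p) ≠ 0 := fun h =>
    hpB ((ZMod.natCast_eq_zero_iff _ _).mp h)
  have hsolve : ∀ (c : ℤ) (x : ZMod (p^(j+1))),
      π ((B : ZMod (p^(j+1))) * x + (c : ZMod (p^(j+1)))) = 0
        ↔ π x = -(c : ZMod p) * (B : ZMod p)⁻¹ := by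
    intro c x
    rw [map_add, map_mul, map_natCast, map_intCast]
    constructor
    · intro h
      have h2 : (B : ZMod p) * π x = -(c : ZMod p) := by linear_combination h
      rw [← h2]
      field_simp
    · intro h
      rw [h]
      field_simp
      ring
  have hnot : ∀ u : ZMod (p^(j+1)) × ZMod (p^(j+1)), (¬ Pc B A (p^(j+1)) u) ↔
      (π u.1 = -(A.1 : ZMod p) * (B : ZMod p)⁻¹ ∧ π u.2 = -(A.2 : ZMod p) * (B : ZMod p)⁻¹) := by
    intro u
    rw [Pc, isCoprime_zmod_pp p hp j, not_not, ← hsolve A.1 u.1, ← hsolve A.2 u.2]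
  have hfilter : (Finset.univ.filter (fun u : ZMod (p^(j+1)) × ZMod (p^(j+1)) =>
      ¬ Pc B A (p^(j+1)) u)).card = (p^j)^2 := by
    have heq : (Finset.univ.filter (fun u : ZMod (p^(j+1)) × ZMod (p^(j+1)) =>
        ¬ Pc B A (p^(j+1)) u))
        = (Finset.univ.filter (fun x : ZMod (p^(j+1)) =>
            π x = -(A.1 : ZMod p) * (B : ZMod p)⁻¹)) ×ˢ
          (Finset.univ.filter (fun x : ZMod (p^(j+1)) =>
            π x = -(A.2 : ZMod p) * (B : ZMod p)⁻¹)) := by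
      rw [← Finset.univ_product_univ, ← Finset.filter_product]
      apply Finset.filter_congr
      intro u _
      exact hnot u
    rw [heq, Finset.card_product, card_fiber p hp j _, card_fiber p hp j _]
    ring
  have htot : (Finset.univ : Finset (ZMod (p^(j+1)) × ZMod (p^(j+1)))).card = (p^(j+1))^2 := by
    rw [Finset.card_univ, Fintype.card_prod, ZMod.card]
    ring
  have hcompl : (Finset.univ.filter (fun u : ZMod (p^(j+1)) × ZMod (p^(j+1)) =>
      Pc B A (p^(j+1)) u)).card + (p^j)^2 = (p^(j+1))^2 := by
    rw [← hfilter, ← htot]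
    exact Finset.card_filter_add_card_filter_not
      (p := fun u : ZMod (p^(j+1)) × ZMod (p^(j+1)) => Pc B A (p^(j+1)) u)
  unfold cnt
  rw [Nat.card_eq_fintype_card, Fintype.card_subtype]
  omega
lemma cnt_formula (B : ℕ) (A : ℤ × ℤ)
    (hgcd : Int.gcd (Int.gcd A.1 A.2 : ℤ) (B : ℤ) = 1) (q : ℕ) :
    0 < q → (cnt B A q : ℝ)
      = (q : ℝ)^2 * ∏ p ∈ q.primeFactors.filter (fun p => ¬ p ∣ B), (1 - 1/(p:ℝ)^2) := by
  induction q using Nat.recOnPosPrimePosCoprime with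
  | prime_pow p n hp hn =>
    intro _
    have hp' : p.Prime := hp
    obtain ⟨j, rfl⟩ := Nat.exists_eq_succ_of_ne_zero hn.ne'
    rw [Nat.primeFactors_prime_pow (Nat.succ_ne_zero j) hp', Finset.filter_singleton]
    by_cases hpB : p ∣ B
    · rw [if_neg (by simpa using hpB), cnt_pp_dvd B A hgcd p j hp' hpB]
      push_cast
      simp
    · rw [if_pos (by simpa using hpB), cnt_pp_not_dvd B A p j hp' hpB,
        Nat.cast_sub (Nat.pow_le_pow_left (Nat.pow_le_pow_right hp'.pos (by omega)) 2),
        Finset.prod_singleton]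
      push_cast
      have hp0 : (p : ℝ) ≠ 0 := by exact_mod_cast hp'.pos.ne'
      field_simp
      ring
  | zero => intro h; omega
  | one =>
    intro _
    rw [cnt_one B A]
    simp
  | coprime a b ha hb hab iha ihb =>
    intro _
    rw [cnt_mul B A a b hab, hab.primeFactors_mul, Finset.filter_union,
      Finset.prod_union (Finset.disjoint_filter_filter
        hab.disjoint_primeFactors)]
    push_cast [iha (by omega), ihb (by omega)]
    ring

noncomputable def fsq : ℕ →* ℝ where
  toFun n := (((n : ℝ))^2)⁻¹
  map_one' := by norm_num
  map_mul' m n := by push_cast; rw [mul_pow, mul_inv]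

lemma prod_lower (s : Finset ℕ) (hs : ∀ p ∈ s, p.Prime) :
    6 / Real.pi ^ 2 ≤ ∏ p ∈ s, (1 - 1/(p:ℝ)^2) := by
  have hsum : Summable (fun n : ℕ => fsq n) := by
    have := Real.summable_one_div_nat_pow.mpr (le_refl 2)
    simpa [fsq, one_div] using this
  have key := EulerProduct.prod_filter_prime_geometric_eq_tsum_factoredNumbers hsum s
  rw [Finset.filter_true_of_mem hs] at key
  have hle : (∑' m : Nat.factoredNumbers s, fsq m) ≤ ∑' n, fsq n := by
    apply Summable.tsum_subtype_le
    · intro n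
      show (0:ℝ) ≤ ((n:ℝ)^2)⁻¹
      positivity
    · exact hsum
  have hzeta : (∑' n : ℕ, fsq n) = Real.pi^2/6 := by
    rw [← hasSum_zeta_two.tsum_eq]
    congr 1
    ext n
    simp [fsq, one_div]
  rw [hzeta] at hle
  rw [← key] at hle
  have hfp : ∀ p ∈ s, (1 : ℝ) - fsq p = 1 - 1/(p:ℝ)^2 := by
    intro p _
    simp [fsq, one_div]
  have hpos : ∀ p ∈ s, (0:ℝ) < 1 - 1/(p:ℝ)^2 := by
    intro p hp
    have h2 : (2:ℝ) ≤ (p:ℝ) := by exact_mod_cast (hs p hp).two_le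
    have : (1:ℝ)/(p:ℝ)^2 < 1 := by
      rw [div_lt_one (by positivity)]
      nlinarith
    linarith
  have hP : (0:ℝ) < ∏ p ∈ s, (1 - 1/(p:ℝ)^2) := Finset.prod_pos hpos
  have hQ : (∏ p ∈ s, (1 - 1/(p:ℝ)^2))⁻¹ ≤ Real.pi^2/6 := by
    rw [← Finset.prod_inv_distrib]
    calc ∏ p ∈ s, (1 - 1/(p:ℝ)^2)⁻¹ = ∏ p ∈ s, (1 - fsq p)⁻¹ := by
          exact Finset.prod_congr rfl fun p hp => by rw [hfp p hp]
      _ ≤ Real.pi^2/6 := hle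
  have hπ : (0:ℝ) < Real.pi^2/6 := by positivity
  have := inv_anti₀ (by positivity) hQ
  rwa [inv_div, inv_inv] at this

theorem shift_reduced_count (q B : ℕ) (hq : 0 < q) (hB : 0 < B) (A : ℤ × ℤ)
    (hgcd : Int.gcd (Int.gcd A.1 A.2 : ℤ) (B : ℤ) = 1) :
    (({u : ℤ × ℤ | 0 ≤ u.1 ∧ u.1 < q ∧ 0 ≤ u.2 ∧ u.2 < q ∧
        Int.gcd (Int.gcd ((B : ℤ) * u.1 + A.1) ((B : ℤ) * u.2 + A.2) : ℤ)
          ((B : ℤ) * q) = 1}.ncard : ℝ))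
      = (q : ℝ) ^ 2 * ∏ p ∈ q.primeFactors.filter (fun p => ¬ p ∣ B), (1 - 1 / (p : ℝ) ^ 2) ∧
    (6 / Real.pi ^ 2) * (q : ℝ) ^ 2
      ≤ (({u : ℤ × ℤ | 0 ≤ u.1 ∧ u.1 < q ∧ 0 ≤ u.2 ∧ u.2 < q ∧
        Int.gcd (Int.gcd ((B : ℤ) * u.1 + A.1) ((B : ℤ) * u.2 + A.2) : ℤ)
          ((B : ℤ) * q) = 1}.ncard : ℝ)) := by
  have hnc := ncard_eq_cnt q B hq hB A hgcd
  have hform := cnt_formula B A hgcd q hq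
  rw [hnc]
  refine ⟨hform, ?_⟩
  rw [hform]
  have hlow := prod_lower (q.primeFactors.filter (fun p => ¬ p ∣ B))
    (fun p hp => Nat.prime_of_mem_primeFactors (Finset.mem_filter.mp hp).1)
  calc (6 / Real.pi ^ 2) * (q : ℝ)^2
      ≤ (∏ p ∈ q.primeFactors.filter (fun p => ¬ p ∣ B), (1 - 1/(p:ℝ)^2)) * (q:ℝ)^2 :=
        mul_le_mul_of_nonneg_right hlow (by positivity)
    _ = (q : ℝ)^2 * ∏ p ∈ q.primeFactors.filter (fun p => ¬ p ∣ B), (1 - 1/(p:ℝ)^2) := by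
        ring
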